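/- Let A be an m×n real matrix with nonnegative entries and b ∈ ℝ^m nonnegative, with LIN > 0 the attained optimal value of min{‖x‖₁ : Ax ≥ b, x ≥ 0}. Let δ > 0 and let α be a positive integer. Let x' be feasible with ‖x'‖₁ ≤ (1+δ)·LIN and ‖x'‖₁ ≥ α·(1/δ + 1), and let y' be an integral feasible solution (y' ∈ ℕ^n, Ay' ≥ b) with ‖y'‖₁ ≤ (1+δ)·LIN + n and y'_i ≥ x'_i for all i. Then there exists an integral feasible solution y'' ∈ ℕ^n with ‖y''‖₁ ≤ (1+δ)·LIN + n − α and Σ_{i : y''_i < y'_i} (y'_i − y''_i) ≤ α·(1/δ + 2). -/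

import Mathlib

open Finset

private lemma exists_r {n : ℕ} (c : Fin n → ℕ) (R : ℕ) (hR : R ≤ ∑ j, c j) :
    ∃ r : Fin n → ℕ, (∀ j, r j ≤ c j) ∧ ∑ j, r j = R := by
  induction R with
  | zero => exact ⟨fun _ => 0, fun j => Nat.zero_le _, by simp⟩
  | succ R ih =>
    obtain ⟨r, hrc, hrs⟩ := ih (Nat.le_of_succ_le hR)
    have hex : ∃ j, r j < c j := by
      by_contra h
      push_neg at h
      have h2 : ∑ j, c j ≤ ∑ j, r j := Finset.sum_le_sum fun j _ => h j
      omega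
    obtain ⟨j, hj⟩ := hex
    refine ⟨Function.update r j (r j + 1), fun k => ?_, ?_⟩
    · by_cases hk : k = j
      · subst hk; simp only [Function.update_self]; omega
      · simp only [Function.update_of_ne hk]; exact hrc k
    · have h4 : ∑ x ∈ Finset.univ.erase j, Function.update r j (r j + 1) x
          = ∑ x ∈ Finset.univ.erase j, r x :=
        Finset.sum_congr rfl fun x hx => by
          rw [Function.update_of_ne (Finset.ne_of_mem_erase hx)]
      have h5 := Finset.sum_erase_add Finset.univ (Function.update r j (r j + 1))
        (Finset.mem_univ j)
      have h6 := Finset.sum_erase_add Finset.univ r (Finset.mem_univ j)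
      rw [Function.update_self] at h5
      omega

private lemma key_reduce {m n : ℕ} (A : Matrix (Fin m) (Fin n) ℝ) (hA : ∀ i j, 0 ≤ A i j)
    (b : Fin m → ℝ) (y' ℓ : Fin n → ℕ)
    (hl : ∀ i, b i ≤ A.mulVec (fun j => (ℓ j : ℝ)) i)
    (T : ℝ) (a : ℕ)
    (hT : (∑ j, (ℓ j : ℝ)) ≤ T)
    (hY : (∑ j, (y' j : ℝ)) ≤ T + a) :
    ∃ y'' : Fin n → ℕ,
      (∀ i, b i ≤ A.mulVec (fun j => (y'' j : ℝ)) i) ∧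
      (∑ j, (y'' j : ℝ)) ≤ T ∧
      (∑ j ∈ Finset.univ.filter (fun j => y'' j < y' j), ((y' j : ℝ) - (y'' j : ℝ)))
        ≤ (a : ℝ) + ∑ j, ((ℓ j - y' j : ℕ) : ℝ) := by
  have hT0 : 0 ≤ T := le_trans (Finset.sum_nonneg fun j _ => Nat.cast_nonneg _) hT
  set K : ℕ := ⌊T⌋₊ with hK
  have hKT : (K : ℝ) ≤ T := Nat.floor_le hT0
  have hlK : ∑ j, ℓ j ≤ K := Nat.le_floor (by push_cast; exact hT)
  have hYK : ∑ j, y' j ≤ K + a := by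
    have h1 : (∑ j, y' j : ℕ) ≤ ⌊T + (a : ℝ)⌋₊ := Nat.le_floor (by push_cast; exact hY)
    rwa [Nat.floor_add_natCast hT0] at h1
  set w : Fin n → ℕ := fun j => max (y' j) (ℓ j) with hw
  have hled : ∀ j, ℓ j ≤ w j := fun j => le_max_right _ _
  have hyw : ∀ j, y' j ≤ w j := fun j => le_max_left _ _
  have hwE : ∀ j, w j = y' j + (ℓ j - y' j) := by
    intro j
    rcases le_total (ℓ j) (y' j) with h | h
    · rw [hw]; dsimp only; rw [max_eq_left h]; omega
    · rw [hw]; dsimp only; rw [max_eq_right h]; omega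
  have hSw : ∑ j, w j = ∑ j, y' j + ∑ j, (ℓ j - y' j) := by
    rw [← Finset.sum_add_distrib]; exact Finset.sum_congr rfl fun j _ => hwE j
  have hSwl : ∑ j, w j = ∑ j, ℓ j + ∑ j, (w j - ℓ j) := by
    rw [← Finset.sum_add_distrib]
    exact Finset.sum_congr rfl fun j _ => by have := hled j; omega
  have hRle : (∑ j, w j - K) ≤ ∑ j, (w j - ℓ j) := by omega
  obtain ⟨r, hrc, hrs⟩ := exists_r (fun j => w j - ℓ j) (∑ j, w j - K) hRle
  have hrc' : ∀ j, r j ≤ w j - ℓ j := hrc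
  set y'' : Fin n → ℕ := fun j => w j - r j with hy''
  have hry : ∀ j, r j ≤ w j := fun j => le_trans (hrc' j) (Nat.sub_le _ _)
  have hly'' : ∀ j, ℓ j ≤ y'' j := by
    intro j
    have h1 := hrc' j
    have h2 := hled j
    simp only [hy'']
    omega
  have hfeas : ∀ i, b i ≤ A.mulVec (fun j => (y'' j : ℝ)) i := by
    intro i
    refine le_trans (hl i) ?_
    simp only [Matrix.mulVec, dotProduct]
    exact Finset.sum_le_sum fun j _ =>
      mul_le_mul_of_nonneg_left (by exact_mod_cast hly'' j) (hA i j)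
  have hSy'' : ∑ j, y'' j + ∑ j, r j = ∑ j, w j := by
    rw [← Finset.sum_add_distrib]
    exact Finset.sum_congr rfl fun j _ => by
      have := hry j
      simp only [hy'']
      omega
  have hSy''K : ∑ j, y'' j ≤ K := by omega
  refine ⟨y'', hfeas, ?_, ?_⟩
  · calc (∑ j, (y'' j : ℝ)) = ((∑ j, y'' j : ℕ) : ℝ) := by push_cast; rfl
      _ ≤ (K : ℝ) := by exact_mod_cast hSy''K
      _ ≤ T := hKT
  · have hterm : ∀ j ∈ Finset.univ.filter (fun j => y'' j < y' j),
        ((y' j : ℝ) - (y'' j : ℝ)) ≤ (r j : ℝ) := by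
      intro j _
      have h1 : y' j ≤ y'' j + r j := by
        have h2 := hry j
        have h3 := hyw j
        simp only [hy'']
        omega
      have h4 : ((y' j : ℕ) : ℝ) ≤ ((y'' j + r j : ℕ) : ℝ) := by exact_mod_cast h1
      push_cast at h4
      linarith
    have hsum_r : ∑ j, r j ≤ a + ∑ j, (ℓ j - y' j) := by omega
    calc ∑ j ∈ Finset.univ.filter (fun j => y'' j < y' j), ((y' j : ℝ) - (y'' j : ℝ))
        ≤ ∑ j ∈ Finset.univ.filter (fun j => y'' j < y' j), (r j : ℝ) :=
          Finset.sum_le_sum hterm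
      _ ≤ ∑ j, (r j : ℝ) := Finset.sum_le_sum_of_subset_of_nonneg
          (Finset.filter_subset _ _) (fun j _ _ => Nat.cast_nonneg _)
      _ = ((∑ j, r j : ℕ) : ℝ) := by push_cast; rfl
      _ ≤ ((a + ∑ j, (ℓ j - y' j) : ℕ) : ℝ) := by exact_mod_cast hsum_r
      _ = (a : ℝ) + ∑ j, ((ℓ j - y' j : ℕ) : ℝ) := by push_cast; rfl

theorem algorithm3_correct
    (m n : ℕ) (hm : 0 < m) (hn : 0 < n)
    (A : Matrix (Fin m) (Fin n) ℝ) (hA : ∀ i j, 0 ≤ A i j)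
    (b : Fin m → ℝ) (hb : ∀ i, 0 ≤ b i)
    (xOPT : Fin n → ℝ)
    (hxOPTnonneg : ∀ j, 0 ≤ xOPT j)
    (hxOPTfeas : ∀ i, b i ≤ A.mulVec xOPT i)
    (hxOPTopt : ∀ x : Fin n → ℝ, (∀ j, 0 ≤ x j) → (∀ i, b i ≤ A.mulVec x i) →
      ∑ j, |xOPT j| ≤ ∑ j, |x j|)
    (LIN : ℝ) (hLIN : LIN = ∑ j, |xOPT j|) (hLINpos : 0 < LIN)
    (δ : ℝ) (hδ : 0 < δ) (α : ℕ) (hα : 0 < α)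
    (x' : Fin n → ℝ)
    (hx'nonneg : ∀ j, 0 ≤ x' j)
    (hx'feas : ∀ i, b i ≤ A.mulVec x' i)
    (hx'val : ∑ j, |x' j| ≤ (1 + δ) * LIN)
    (hx'big : (α : ℝ) * (1 / δ + 1) ≤ ∑ j, |x' j|)
    (y' : Fin n → ℕ)
    (hy'feas : ∀ i, b i ≤ A.mulVec (fun j => (y' j : ℝ)) i)
    (hy'val : ∑ j, (y' j : ℝ) ≤ (1 + δ) * LIN + n)
    (hy'ge : ∀ j, x' j ≤ (y' j : ℝ)) :
    ∃ y'' : Fin n → ℕ,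
      (∀ i, b i ≤ A.mulVec (fun j => (y'' j : ℝ)) i) ∧
      ∑ j, (y'' j : ℝ) ≤ (1 + δ) * LIN + n - α ∧
      ∑ j ∈ Finset.univ.filter (fun j => y'' j < y' j), ((y' j : ℝ) - (y'' j : ℝ))
        ≤ (α : ℝ) * (1 / δ + 2) := by
  have habs' : ∑ j, |x' j| = ∑ j, x' j :=
    Finset.sum_congr rfl fun j _ => abs_of_nonneg (hx'nonneg j)
  have habsO : ∑ j, |xOPT j| = ∑ j, xOPT j :=
    Finset.sum_congr rfl fun j _ => abs_of_nonneg (hxOPTnonneg j)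
  set S : ℝ := ∑ j, x' j with hSdef
  have hLLO : LIN = ∑ j, xOPT j := by rw [hLIN, habsO]
  have hSval : S ≤ (1 + δ) * LIN := habs' ▸ hx'val
  have hSbig : (α : ℝ) * (1 / δ + 1) ≤ S := habs' ▸ hx'big
  have hLS : LIN ≤ S := by
    have h := hxOPTopt x' hx'nonneg hx'feas
    rw [← hLIN, habs'] at h
    exact h
  have hδL : (α : ℝ) ≤ δ * LIN := by
    have h1 : (α : ℝ) * (1 / δ + 1) ≤ (1 + δ) * LIN := le_trans hSbig hSval
    have h3 : (α : ℝ) * (1 / δ + 1) * δ = α * (1 + δ) := by field_simp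
    have h2 : (α : ℝ) * (1 + δ) ≤ δ * ((1 + δ) * LIN) := by
      calc (α : ℝ) * (1 + δ) = α * (1 / δ + 1) * δ := h3.symm
        _ ≤ (1 + δ) * LIN * δ := mul_le_mul_of_nonneg_right h1 (le_of_lt hδ)
        _ = δ * ((1 + δ) * LIN) := by ring
    nlinarith [hδ, hLINpos]
  set T : ℝ := (1 + δ) * LIN + ↑n - ↑α with hTdef
  have hY : ∑ j, (y' j : ℝ) ≤ T + α := by
    rw [hTdef]
    have : (1 + δ) * LIN + ↑n - ↑α + ↑α = (1 + δ) * LIN + ↑n := by ring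
    rw [this]
    exact hy'val
  have hbudget0 : (0 : ℝ) ≤ (α : ℝ) * (1 / δ + 1) := by positivity
  have hbudget_eq : (α : ℝ) * (1 / δ + 2) = (α : ℝ) * (1 / δ + 1) + α := by ring
  by_cases hcase : (∑ j, ((⌈x' j⌉₊ : ℕ) : ℝ)) ≤ T
  · -- Case I : round x' up, reduce y' towards it
    have hlfeas : ∀ i, b i ≤ A.mulVec (fun j => ((⌈x' j⌉₊ : ℕ) : ℝ)) i := by
      intro i
      refine le_trans (hx'feas i) ?_
      simp only [Matrix.mulVec, dotProduct]
      exact Finset.sum_le_sum fun j _ =>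
        mul_le_mul_of_nonneg_left (Nat.le_ceil (x' j)) (hA i j)
    obtain ⟨y'', h1, h2, h3⟩ := key_reduce A hA b y' (fun j => ⌈x' j⌉₊) hlfeas T α hcase hY
    have hE0 : ∑ j, ((⌈x' j⌉₊ - y' j : ℕ) : ℝ) = 0 := by
      apply Finset.sum_eq_zero
      intro j _
      have h4 : ⌈x' j⌉₊ ≤ y' j := Nat.ceil_le.mpr (hy'ge j)
      rw [Nat.sub_eq_zero_of_le h4]
      simp
    refine ⟨y'', h1, h2, ?_⟩
    rw [hE0] at h3
    rw [hbudget_eq]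
    linarith
  · -- Case II : mix with the optimum
    push_neg at hcase
    set t : ℝ := S - (1 + δ) * LIN + α with htdef
    have hceilS : (∑ j, ((⌈x' j⌉₊ : ℕ) : ℝ)) < S + n := by
      have h2 : (Finset.univ : Finset (Fin n)).Nonempty := ⟨⟨0, hn⟩, Finset.mem_univ _⟩
      calc ∑ j, ((⌈x' j⌉₊ : ℕ) : ℝ) < ∑ j, (x' j + 1) :=
            Finset.sum_lt_sum_of_nonempty h2 (fun j _ => Nat.ceil_lt_add_one (hx'nonneg j))
        _ = S + n := by
            rw [Finset.sum_add_distrib, Finset.sum_const, Finset.card_univ,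
              Fintype.card_fin, nsmul_eq_mul, mul_one]
    have ht0 : 0 < t := by
      rw [htdef]
      rw [hTdef] at hcase
      linarith
    have htα : t ≤ (α : ℝ) := by rw [htdef]; linarith
    have hD0 : 0 ≤ δ * LIN - α := by linarith
    have hP : S - LIN = δ * LIN - α + t := by rw [htdef]; ring
    have hP0 : 0 < S - LIN := by rw [hP]; linarith
    set lam : ℝ := t / (S - LIN) with hlamdef
    have hlam0 : 0 ≤ lam := le_of_lt (div_pos ht0 hP0)
    have hlam1 : lam ≤ 1 := by
      rw [hlamdef, div_le_one hP0, hP]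
      linarith
    have hlamS : lam * (S - LIN) = t := by
      rw [hlamdef]
      field_simp
    set u : Fin n → ℝ := fun j => (1 - lam) * x' j + lam * xOPT j with hu
    have hu0 : ∀ j, 0 ≤ u j := fun j =>
      add_nonneg (mul_nonneg (by linarith) (hx'nonneg j)) (mul_nonneg hlam0 (hxOPTnonneg j))
    have hSu : ∑ j, u j = (1 + δ) * LIN - α := by
      have h1 : ∑ j, u j = (1 - lam) * S + lam * (∑ j, xOPT j) := by
        simp only [hu]
        rw [Finset.sum_add_distrib, ← Finset.mul_sum, ← Finset.mul_sum]
      rw [h1, ← hLLO]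
      have h2 : (1 - lam) * S + lam * LIN = S - lam * (S - LIN) := by ring
      rw [h2, hlamS, htdef]
      ring
    have hufeas : ∀ i, b i ≤ A.mulVec u i := by
      intro i
      have e1 : A.mulVec u i = (1 - lam) * A.mulVec x' i + lam * A.mulVec xOPT i := by
        simp only [Matrix.mulVec, dotProduct, Finset.mul_sum, hu]
        rw [← Finset.sum_add_distrib]
        exact Finset.sum_congr rfl fun j _ => by ring
      have e2 : b i = (1 - lam) * b i + lam * b i := by ring
      rw [e1, e2]
      exact add_le_add
        (mul_le_mul_of_nonneg_left (hx'feas i) (by linarith))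
        (mul_le_mul_of_nonneg_left (hxOPTfeas i) hlam0)
    set ell : Fin n → ℕ := fun j => ⌈u j⌉₊ with hell
    have hellfeas : ∀ i, b i ≤ A.mulVec (fun j => ((ell j : ℕ) : ℝ)) i := by
      intro i
      refine le_trans (hufeas i) ?_
      simp only [Matrix.mulVec, dotProduct]
      exact Finset.sum_le_sum fun j _ =>
        mul_le_mul_of_nonneg_left (Nat.le_ceil (u j)) (hA i j)
    have hellT : (∑ j, ((ell j : ℕ) : ℝ)) ≤ T := by
      have h2 : (Finset.univ : Finset (Fin n)).Nonempty := ⟨⟨0, hn⟩, Finset.mem_univ _⟩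
      have h1 : ∑ j, ((ell j : ℕ) : ℝ) < ∑ j, (u j + 1) :=
        Finset.sum_lt_sum_of_nonempty h2 (fun j _ => Nat.ceil_lt_add_one (hu0 j))
      have h3 : ∑ j, (u j + 1) = (1 + δ) * LIN - α + n := by
        rw [Finset.sum_add_distrib, Finset.sum_const, Finset.card_univ,
          Fintype.card_fin, nsmul_eq_mul, mul_one, hSu]
      rw [hTdef]
      rw [h3] at h1
      linarith
    obtain ⟨y'', h1, h2, h3⟩ := key_reduce A hA b y' ell hellfeas T α hellT hY
    -- bound the forced increase term
    have hEbound : ∑ j, ((ell j - y' j : ℕ) : ℝ)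
        ≤ lam * LIN + ((n : ℝ) + S - ∑ j, ((⌈x' j⌉₊ : ℕ) : ℝ)) := by
      have hptwise : ∀ j, ((ell j - y' j : ℕ) : ℝ)
          ≤ lam * xOPT j + (1 - (((⌈x' j⌉₊ : ℕ) : ℝ) - x' j)) := by
        intro j
        have g1 : (((⌈x' j⌉₊ : ℕ)) : ℝ) < x' j + 1 := Nat.ceil_lt_add_one (hx'nonneg j)
        have g2 : 0 ≤ lam * xOPT j := mul_nonneg hlam0 (hxOPTnonneg j)
        by_cases hle : ell j ≤ y' j
        · rw [Nat.sub_eq_zero_of_le hle]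
          push_cast
          linarith
        · push_neg at hle
          have hyl : y' j ≤ ell j := le_of_lt hle
          have g0 : ((ell j - y' j : ℕ) : ℝ) = ((ell j : ℕ) : ℝ) - ((y' j : ℕ) : ℝ) := by
            rw [Nat.cast_sub hyl]
          have g3 : ((ell j : ℕ) : ℝ) < u j + 1 := Nat.ceil_lt_add_one (hu0 j)
          have g4 : (((⌈x' j⌉₊ : ℕ)) : ℝ) ≤ ((y' j : ℕ) : ℝ) := by
            exact_mod_cast Nat.ceil_le.mpr (hy'ge j)
          have g5 : 0 ≤ lam * x' j := mul_nonneg hlam0 (hx'nonneg j)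
          have g6 : u j = (1 - lam) * x' j + lam * xOPT j := rfl
          rw [g0]
          rw [g6] at g3
          linarith
      calc ∑ j, ((ell j - y' j : ℕ) : ℝ)
          ≤ ∑ j, (lam * xOPT j + (1 - (((⌈x' j⌉₊ : ℕ) : ℝ) - x' j))) :=
            Finset.sum_le_sum fun j _ => hptwise j
        _ = lam * (∑ j, xOPT j) + ((n : ℝ) + S - ∑ j, ((⌈x' j⌉₊ : ℕ) : ℝ)) := by
            rw [Finset.sum_add_distrib, ← Finset.mul_sum]
            congr 1
            rw [Finset.sum_sub_distrib, Finset.sum_sub_distrib, Finset.sum_const,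
              Finset.card_univ, Fintype.card_fin, nsmul_eq_mul, mul_one]
            ring
        _ = lam * LIN + ((n : ℝ) + S - ∑ j, ((⌈x' j⌉₊ : ℕ) : ℝ)) := by rw [← hLLO]
    have hnSt : (n : ℝ) + S - ∑ j, ((⌈x' j⌉₊ : ℕ) : ℝ) < t := by
      rw [htdef]
      rw [hTdef] at hcase
      linarith
    -- the main numeric inequality : lam * LIN + t ≤ α/δ + α
    have h6 : δ * (t * LIN) ≤ (α + δ * α - δ * t) * (S - LIN) := by
      rw [hP]
      have h8 : (0:ℝ) ≤ (δ * LIN - α) * (α - t) := mul_nonneg hD0 (by linarith)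
      have h9 : (0:ℝ) ≤ δ * ((α - t) * (δ * LIN - α + t)) :=
        mul_nonneg hδ.le (mul_nonneg (by linarith) (by linarith))
      have hcert : (α + δ * α - δ * t) * (δ * LIN - α + t) - δ * (t * LIN)
          = (δ * LIN - α) * (α - t) + δ * ((α - t) * (δ * LIN - α + t)) := by ring
      linarith
    have h7 : lam * LIN ≤ (α : ℝ) / δ + α - t := by
      have e1 : ((α : ℝ) / δ + α - t) = (α + δ * α - δ * t) / δ := by
        field_simp
      have e2 : lam * LIN = t * LIN / (S - LIN) := by rw [hlamdef]; ring
      rw [e2, e1, div_le_div_iff₀ hP0 hδ]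
      linarith
    have hfinal : (α : ℝ) + (lam * LIN + t) ≤ (α : ℝ) * (1 / δ + 2) := by
      have e3 : (α : ℝ) * (1 / δ + 2) = α / δ + α + α := by ring
      rw [e3]
      linarith
    refine ⟨y'', h1, h2, ?_⟩
    calc ∑ j ∈ Finset.univ.filter (fun j => y'' j < y' j), ((y' j : ℝ) - (y'' j : ℝ))
        ≤ (α : ℝ) + ∑ j, ((ell j - y' j : ℕ) : ℝ) := h3
      _ ≤ (α : ℝ) + (lam * LIN + t) := by linarith
      _ ≤ (α : ℝ) * (1 / δ + 2) := hfinal
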